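/- Let κ, m, α, a, k, p ∈ ℝ with k ≠ 0 and p ≠ 0. Suppose u : ℝ → ℝ → ℝ is C² on ℝ × (0,∞), α + u_r(t,r) ≠ 0 for all t ∈ ℝ and r > 0, and u satisfies u_t(t,r) = κ·u_rr(t,r)/(α + u_r(t,r))² − (m/r)·κ/(α + u_r(t,r)) + a + k·exp(p·u(t,r)) for all t ∈ ℝ and r > 0. Let G : ℝ → ℝ be differentiable on (0,∞) with G'(r) = −k·p·r^m·exp(−p·α·r) for all r > 0. Define T(t,r) = r^m·exp(−p·((p·κ − a)·t + α·r + u(t,r))) and X(t,r) = −exp(p·(a − p·κ)·t)·(p·κ·r^m·exp(−p·(α·r + u(t,r)))/(α + u_r(t,r)) + G(r)). Then ∂T/∂t(t,r) + ∂X/∂r(t,r) = 0 for all t ∈ ℝ and r > 0. -/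

import Mathlib

noncomputable section

/-- Partial derivative in the first (time) variable. -/
def partial_t (u : ℝ → ℝ → ℝ) (t r : ℝ) : ℝ := deriv (fun s => u s r) t

/-- Partial derivative in the second (space) variable. -/
def partial_r (u : ℝ → ℝ → ℝ) (t r : ℝ) : ℝ := deriv (fun s => u t s) r

/-- Second partial derivative in the second (space) variable. -/
def partial_rr (u : ℝ → ℝ → ℝ) (t r : ℝ) : ℝ := deriv (deriv (fun s => u t s)) r

/-- Mixed partial derivative: first in space, then in time. -/
def partial_tr (u : ℝ → ℝ → ℝ) (t r : ℝ) : ℝ := deriv (fun s => deriv (fun y => u s y) r) t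

/-- `u` is C² on ℝ × (0,∞): `u`, `u_t`, `u_r`, `u_rr` and the mixed partial `u_tr`
exist and are continuous there. -/
def IsC2On (u : ℝ → ℝ → ℝ) : Prop :=
  (∀ t r : ℝ, 0 < r → DifferentiableAt ℝ (fun s => u s r) t) ∧
  (∀ t r : ℝ, 0 < r → DifferentiableAt ℝ (fun s => u t s) r) ∧
  (∀ t r : ℝ, 0 < r → DifferentiableAt ℝ (deriv (fun s => u t s)) r) ∧
  (∀ t r : ℝ, 0 < r → DifferentiableAt ℝ (fun s => deriv (fun y => u s y) r) t) ∧
  ContinuousOn (fun q : ℝ × ℝ => u q.1 q.2) {q : ℝ × ℝ | 0 < q.2} ∧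
  ContinuousOn (fun q : ℝ × ℝ => partial_t u q.1 q.2) {q : ℝ × ℝ | 0 < q.2} ∧
  ContinuousOn (fun q : ℝ × ℝ => partial_r u q.1 q.2) {q : ℝ × ℝ | 0 < q.2} ∧
  ContinuousOn (fun q : ℝ × ℝ => partial_rr u q.1 q.2) {q : ℝ × ℝ | 0 < q.2} ∧
  ContinuousOn (fun q : ℝ × ℝ => partial_tr u q.1 q.2) {q : ℝ × ℝ | 0 < q.2}

/-- Conservation law for the 1-dimensional nonlinear diffusion-reaction equation with
diffusivity `h(v) = -κ/(α+v)` and source `f(u) = a + k·exp(p·u)`. -/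
theorem conservation_law_exponential_source (κ m α a k p : ℝ) (hk : k ≠ 0) (hp : p ≠ 0)
    (u : ℝ → ℝ → ℝ) (hu : IsC2On u)
    (hur : ∀ t r : ℝ, 0 < r → α + partial_r u t r ≠ 0)
    (hpde : ∀ t r : ℝ, 0 < r →
      partial_t u t r
        = κ * partial_rr u t r / (α + partial_r u t r) ^ 2
          - (m / r) * κ / (α + partial_r u t r) + a + k * Real.exp (p * u t r))
    (G : ℝ → ℝ)
    (hG : ∀ r : ℝ, 0 < r → HasDerivAt G (-k * p * r ^ m * Real.exp (-p * α * r)) r)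
    (T X : ℝ → ℝ → ℝ)
    (hT : ∀ t r : ℝ, T t r
      = r ^ m * Real.exp (-p * ((p * κ - a) * t + α * r + u t r)))
    (hX : ∀ t r : ℝ, X t r
      = -(Real.exp (p * (a - p * κ) * t)
          * (p * κ * r ^ m * Real.exp (-p * (α * r + u t r)) / (α + partial_r u t r)
            + G r))) :
    ∀ t r : ℝ, 0 < r → partial_t T t r + partial_r X t r = 0 := by
  obtain ⟨hdt, hdr, hdrr, hdtr, _⟩ := hu
  intro t r hr
  have hrne : r ≠ 0 := ne_of_gt hr
  have hD : α + partial_r u t r ≠ 0 := hur t r hr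
  have hu_t : HasDerivAt (fun s => u s r) (partial_t u t r) t := (hdt t r hr).hasDerivAt
  have hu_r : HasDerivAt (fun s => u t s) (partial_r u t r) r := (hdr t r hr).hasDerivAt
  have hu_rr : HasDerivAt (fun s => partial_r u t s) (partial_rr u t r) r :=
    (hdrr t r hr).hasDerivAt
  -- derivative of T in t
  have h1 : HasDerivAt (fun s => -p * ((p * κ - a) * s + α * r + u s r))
      (-p * ((p * κ - a) + partial_t u t r)) t := by
    have h := ((((hasDerivAt_id t).const_mul (p * κ - a)).add_const (α * r)).add
      hu_t).const_mul (-p)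
    exact h.congr_deriv (by ring)
  have hTt : HasDerivAt (fun s => T s r)
      (r ^ m * (Real.exp (-p * ((p * κ - a) * t + α * r + u t r))
        * (-p * ((p * κ - a) + partial_t u t r)))) t := by
    have h := (h1.exp.const_mul (r ^ m : ℝ))
    have hfun : (fun s => T s r)
        = fun s => (r : ℝ) ^ m * Real.exp (-p * ((p * κ - a) * s + α * r + u s r)) :=
      funext fun s => hT s r
    rw [hfun]
    convert h using 1
  -- derivative of X in r
  have hpow : HasDerivAt (fun s : ℝ => s ^ m) (m * r ^ (m - 1)) r := by
    simpa using Real.hasDerivAt_rpow_const (p := m) (Or.inl hrne)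
  have hφ : HasDerivAt (fun s => -p * (α * s + u t s)) (-p * (α + partial_r u t r)) r := by
    have h := (((hasDerivAt_id r).const_mul α).add hu_r).const_mul (-p)
    exact h.congr_deriv (by ring)
  have hN : HasDerivAt (fun s => p * κ * s ^ m * Real.exp (-p * (α * s + u t s)))
      (p * κ * (m * r ^ (m - 1)) * Real.exp (-p * (α * r + u t r))
        + p * κ * r ^ m * (Real.exp (-p * (α * r + u t r)) * (-p * (α + partial_r u t r)))) r := by
    have h := ((hpow.const_mul (p * κ)).mul hφ.exp)
    exact h
  have hDen : HasDerivAt (fun s => α + partial_r u t s) (partial_rr u t r) r :=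
    hu_rr.const_add α
  have hquot := hN.div hDen hD
  have hXr : HasDerivAt (fun s => X t s)
      (-(Real.exp (p * (a - p * κ) * t)
        * (((p * κ * (m * r ^ (m - 1)) * Real.exp (-p * (α * r + u t r))
            + p * κ * r ^ m * (Real.exp (-p * (α * r + u t r)) * (-p * (α + partial_r u t r))))
              * (α + partial_r u t r)
            - p * κ * r ^ m * Real.exp (-p * (α * r + u t r)) * partial_rr u t r)
            / (α + partial_r u t r) ^ 2
          + -k * p * r ^ m * Real.exp (-p * α * r)))) r := by
    have h := ((hquot.add (hG r hr)).const_mul (Real.exp (p * (a - p * κ) * t))).neg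
    have hfun : (fun s => X t s)
        = fun s => -(Real.exp (p * (a - p * κ) * t)
            * (p * κ * s ^ m * Real.exp (-p * (α * s + u t s)) / (α + partial_r u t s) + G s)) :=
      funext fun s => hX t s
    rw [hfun]
    exact h
  -- assemble
  have hpt : partial_t T t r = r ^ m * (Real.exp (-p * ((p * κ - a) * t + α * r + u t r))
      * (-p * ((p * κ - a) + partial_t u t r))) := hTt.deriv
  have hpx : partial_r X t r = _ := hXr.deriv
  rw [hpt, hpx, hpde t r hr]
  -- exponential identities
  have e1 : Real.exp (-p * ((p * κ - a) * t + α * r + u t r))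
      = Real.exp (p * (a - p * κ) * t) * Real.exp (-(p * α) * r) / Real.exp (p * u t r) := by
    rw [eq_div_iff (Real.exp_ne_zero _), ← Real.exp_add, ← Real.exp_add]
    congr 1
    ring
  have e2 : Real.exp (-p * (α * r + u t r))
      = Real.exp (-(p * α) * r) / Real.exp (p * u t r) := by
    rw [eq_div_iff (Real.exp_ne_zero _), ← Real.exp_add]
    congr 1
    ring
  have e3 : Real.exp (-p * α * r) = Real.exp (-(p * α) * r) := by ring_nf
  have hrm : r ^ (m - 1) = r ^ m / r := by
    rw [eq_div_iff hrne, ← Real.rpow_add_one hrne, sub_add_cancel]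
  rw [e1, e2, e3, hrm]
  field_simp [hD, hrne]
  ring
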